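/- Let g : (0, ∞) → (0, ∞) be continuous and suppose there exist constants C, σ, R₀ > 0 such that ∫_R^∞ g(r)^{-1/3} dr ≥ R^{-σ/3} for all R ≥ R₀. If additionally Z : [R₀, ∞) → (0, ∞) is differentiable, nondecreasing, and satisfies Z(R)^{4/3} ≤ C·Z'(R)·η(R)^{1/3}·g(R)^{1/3} for a positive decreasing function η, then Z(R) ≤ 27·C³·η(R)·R^σ for all R ≥ R₀. -/

import Mathlib

open Set MeasureTheory

private lemma inv_flip' {a z M : ℝ} (ha : 0 < a) (hz : 0 < z) (h : z ≤ M * a) :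
    a⁻¹ ≤ M * z⁻¹ := by
  have h2 := mul_le_mul_of_nonneg_right h (le_of_lt (mul_pos (inv_pos.2 ha) (inv_pos.2 hz)))
  calc a⁻¹ = z * (a⁻¹ * z⁻¹) := by field_simp
    _ ≤ M * a * (a⁻¹ * z⁻¹) := h2
    _ = M * z⁻¹ := by field_simp

private lemma inv_flip {a z M : ℝ} (ha : 0 < a) (hz : 0 < z) (h : a⁻¹ ≤ M * z⁻¹) :
    z ≤ M * a := by
  have h2 := mul_le_mul_of_nonneg_left h (le_of_lt (mul_pos ha hz))
  calc z = a * z * a⁻¹ := by field_simp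
    _ ≤ a * z * (M * z⁻¹) := h2
    _ = M * a := by field_simp

/-- Combined ODE lemma for the φ-F-symphonic Liouville argument: if
`∫_R^∞ g^{-1/3} ≥ R^{-σ/3}` and `Z^{4/3} ≤ C Z' η^{1/3} g^{1/3}` with `Z` positive,
nondecreasing and `η` positive decreasing, then `Z(R) ≤ 27 C³ η(R) R^σ`. -/
theorem combined_ode_lemma (g Z η : ℝ → ℝ) (C σ R₀ : ℝ)
    (hC : 0 < C) (hσ : 0 < σ) (hR₀ : 0 < R₀)
    (hgcont : ContinuousOn g (Set.Ioi 0))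
    (hgpos : ∀ r, 0 < r → 0 < g r)
    (hint : ∀ R, R₀ ≤ R → R ^ (-σ / 3) ≤ ∫ r in Set.Ioi R, g r ^ (-(1 : ℝ) / 3))
    (hZpos : ∀ R, R₀ ≤ R → 0 < Z R)
    (hZdiff : ∀ R, R₀ ≤ R → DifferentiableAt ℝ Z R)
    (hZmono : MonotoneOn Z (Set.Ici R₀))
    (hηpos : ∀ R, 0 < η R)
    (hηanti : AntitoneOn η (Set.Ici R₀))
    (hineq : ∀ R, R₀ ≤ R →
      Z R ^ ((4 : ℝ) / 3) ≤ C * deriv Z R * η R ^ ((1 : ℝ) / 3) * g R ^ ((1 : ℝ) / 3)) :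
    ∀ R, R₀ ≤ R → Z R ≤ 27 * C ^ 3 * η R * R ^ σ := by
  -- deriv Z is nonnegative on [R₀, ∞)
  have hZ' : ∀ r, R₀ ≤ r → 0 ≤ deriv Z r := by
    intro r hr
    by_contra h
    push_neg at h
    have h1 := hineq r hr
    have h2 : 0 < Z r ^ ((4 : ℝ) / 3) := Real.rpow_pos_of_pos (hZpos r hr) _
    have h3 : 0 < η r ^ ((1 : ℝ) / 3) := Real.rpow_pos_of_pos (hηpos r) _
    have h4 : 0 < g r ^ ((1 : ℝ) / 3) := Real.rpow_pos_of_pos (hgpos r (hR₀.trans_le hr)) _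
    have hneg : C * deriv Z r * η r ^ ((1 : ℝ) / 3) * g r ^ ((1 : ℝ) / 3) < 0 := by
      have := mul_neg_of_neg_of_pos
        (mul_neg_of_neg_of_pos (mul_neg_of_pos_of_neg hC h) h3) h4
      linarith
    linarith
  intro R hR
  have hRpos : 0 < R := hR₀.trans_le hR
  have hZR := hZpos R hR
  have hηR : 0 < η R ^ ((1 : ℝ) / 3) := Real.rpow_pos_of_pos (hηpos R) _
  -- derivative of the comparison function
  have hG : ∀ r, R₀ ≤ r →
      HasDerivAt (fun t => (-3 * (C * η R ^ ((1 : ℝ) / 3))) * Z t ^ (-(1 : ℝ) / 3))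
        (C * deriv Z r * η R ^ ((1 : ℝ) / 3) * Z r ^ (-(4 : ℝ) / 3)) r := by
    intro r hr
    have hz := hZpos r hr
    have hd := (hZdiff r hr).hasDerivAt
    have h1 : HasDerivAt (fun t => Z t ^ (-(1 : ℝ) / 3))
        (deriv Z r * (-(1 : ℝ) / 3) * Z r ^ (-(1 : ℝ) / 3 - 1)) r :=
      hd.rpow_const (Or.inl hz.ne')
    have h2 := h1.const_mul (-3 * (C * η R ^ ((1 : ℝ) / 3)))
    refine h2.congr_deriv ?_
    rw [show (-(4 : ℝ) / 3) = (-(1 : ℝ) / 3 - 1) by norm_num]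
    ring
  -- bound on finite interval integrals
  have hbound : ∀ S, R ≤ S → (∫ r in R..S, g r ^ (-(1 : ℝ) / 3)) ≤
      3 * C * η R ^ ((1 : ℝ) / 3) * Z R ^ (-(1 : ℝ) / 3) := by
    intro S hRS
    have hsub : Set.Icc R S ⊆ Set.Ioi 0 := fun x hx => hRpos.trans_le hx.1
    have key := intervalIntegral.integral_le_sub_of_hasDeriv_right_of_le
      (g := fun t => (-3 * (C * η R ^ ((1 : ℝ) / 3))) * Z t ^ (-(1 : ℝ) / 3))
      (g' := fun r => C * deriv Z r * η R ^ ((1 : ℝ) / 3) * Z r ^ (-(4 : ℝ) / 3))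
      (φ := fun r => g r ^ (-(1 : ℝ) / 3)) hRS
      (fun x hx => ((hG x (hR.trans hx.1)).continuousAt).continuousWithinAt)
      (fun x hx => ((hG x (hR.trans hx.1.le)).hasDerivWithinAt))
      (((hgcont.mono hsub).rpow_const
        (fun x hx => Or.inl (hgpos x (hsub hx)).ne')).integrableOn_Icc)
      ?_
    · have hZS : 0 ≤ Z S ^ (-(1 : ℝ) / 3) :=
        Real.rpow_nonneg (hZpos S (hR.trans hRS)).le _
      have hK : 0 ≤ C * η R ^ ((1 : ℝ) / 3) := le_of_lt (mul_pos hC hηR)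
      have := mul_nonneg hK hZS
      calc (∫ r in R..S, g r ^ (-(1 : ℝ) / 3))
          ≤ (-3 * (C * η R ^ ((1 : ℝ) / 3))) * Z S ^ (-(1 : ℝ) / 3) -
            (-3 * (C * η R ^ ((1 : ℝ) / 3))) * Z R ^ (-(1 : ℝ) / 3) := key
        _ ≤ 3 * C * η R ^ ((1 : ℝ) / 3) * Z R ^ (-(1 : ℝ) / 3) := by nlinarith
    · -- pointwise inequality φ ≤ g'
      intro x hx
      have hx₀ : R₀ ≤ x := hR.trans hx.1.le
      have hxpos : 0 < x := hR₀.trans_le hx₀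
      have hgx : 0 < g x := hgpos x hxpos
      have hzx : 0 < Z x := hZpos x hx₀
      have hd := hZ' x hx₀
      have hgq : 0 < g x ^ ((1 : ℝ) / 3) := Real.rpow_pos_of_pos hgx _
      have hzq : 0 < Z x ^ ((4 : ℝ) / 3) := Real.rpow_pos_of_pos hzx _
      have h5 : η x ^ ((1 : ℝ) / 3) ≤ η R ^ ((1 : ℝ) / 3) :=
        Real.rpow_le_rpow (hηpos x).le
          (hηanti hR hx₀ hx.1.le) (by norm_num)
      have key2 : Z x ^ ((4 : ℝ) / 3) ≤
          C * deriv Z x * η R ^ ((1 : ℝ) / 3) * g x ^ ((1 : ℝ) / 3) := by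
        refine (hineq x hx₀).trans ?_
        nlinarith [mul_nonneg (mul_nonneg (mul_nonneg hC.le hd) hgq.le) (sub_nonneg.2 h5)]
      have hflip := inv_flip' hgq hzq
        (M := C * deriv Z x * η R ^ ((1 : ℝ) / 3)) (by linarith [key2])
      show g x ^ (-(1 : ℝ) / 3) ≤ C * deriv Z x * η R ^ ((1 : ℝ) / 3) * Z x ^ (-(4 : ℝ) / 3)
      rw [show (-(1 : ℝ) / 3) = -((1 : ℝ) / 3) by ring, Real.rpow_neg hgx.le,
        show (-(4 : ℝ) / 3) = -((4 : ℝ) / 3) by ring, Real.rpow_neg hzx.le]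
      exact hflip
  -- bound on the improper integral
  have himp : (∫ r in Set.Ioi R, g r ^ (-(1 : ℝ) / 3)) ≤
      3 * C * η R ^ ((1 : ℝ) / 3) * Z R ^ (-(1 : ℝ) / 3) := by
    by_cases hInt : IntegrableOn (fun r => g r ^ (-(1 : ℝ) / 3)) (Set.Ioi R)
    · have htend := intervalIntegral_tendsto_integral_Ioi R hInt
        (Filter.tendsto_id (α := ℝ))
      exact le_of_tendsto htend (Filter.eventually_atTop.2 ⟨R, fun S hS => hbound S hS⟩)
    · rw [MeasureTheory.integral_undef hInt]
      positivity
  -- combine with the lower bound hypothesis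
  have h6 : R ^ (-σ / 3) ≤ 3 * C * η R ^ ((1 : ℝ) / 3) * Z R ^ (-(1 : ℝ) / 3) :=
    (hint R hR).trans himp
  rw [show (-σ / 3) = -(σ / 3) by ring, Real.rpow_neg hRpos.le,
    show (-(1 : ℝ) / 3) = -((1 : ℝ) / 3) by ring, Real.rpow_neg hZR.le] at h6
  have hRq : 0 < R ^ (σ / 3) := Real.rpow_pos_of_pos hRpos _
  have hZq : 0 < Z R ^ ((1 : ℝ) / 3) := Real.rpow_pos_of_pos hZR _
  have h7 : Z R ^ ((1 : ℝ) / 3) ≤ 3 * C * η R ^ ((1 : ℝ) / 3) * R ^ (σ / 3) :=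
    inv_flip hRq hZq h6
  -- cube both sides
  have hcube : ∀ (x : ℝ) (p : ℝ), 0 ≤ x → (x ^ p) ^ (3 : ℕ) = x ^ (p * 3) := by
    intro x p hx
    rw [← Real.rpow_natCast (x ^ p) 3, ← Real.rpow_mul hx]
    norm_num
  have h8 : (Z R ^ ((1 : ℝ) / 3)) ^ (3 : ℕ) ≤
      (3 * C * η R ^ ((1 : ℝ) / 3) * R ^ (σ / 3)) ^ (3 : ℕ) :=
    pow_le_pow_left₀ hZq.le h7 3
  rw [hcube _ _ hZR.le] at h8
  norm_num at h8
  calc Z R ≤ (3 * C * η R ^ ((1 : ℝ) / 3) * R ^ (σ / 3)) ^ (3 : ℕ) := h8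
    _ = 27 * C ^ 3 * η R * R ^ σ := by
        rw [mul_pow, mul_pow, mul_pow, hcube _ _ (hηpos R).le, hcube _ _ hRpos.le]
        norm_num
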